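/- Let μ be a density on [q]^n with H∞(μ) ≥ (n − t)·log₂ q. Then there exists a partition [q]^n = (⋃_{i∈[N]} S_i) ∪ S_error such that: (i) for each i ∈ [N], the conditional density μ|_{S_i} is a 10t-CBD distribution; and (ii) μ(S_error) ≤ q^{-t}, where μ(S) = Pr_{X~μ}[X ∈ S]. -/

import Mathlib

open scoped BigOperators

noncomputable section

/-- Sign of a Boolean bit, encoding `b ↦ (-1)^b ∈ {-1,1}`. -/
def sgn (x : Bool) : ℝ := if x then -1 else 1

/-- Expectation under the uniform distribution on a finite type. -/
def uexp {Ω : Type*} [Fintype Ω] (f : Ω → ℝ) : ℝ :=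
  (∑ x, f x) / (Fintype.card Ω : ℝ)

/-- The parity character `χ_S(x) = ∏_{i ∈ S} x_i` on the cube `{-1,1}^n`. -/
def chi {n : ℕ} (S : Finset (Fin n)) (x : Fin n → Bool) : ℝ :=
  ∏ i ∈ S, sgn (x i)

/-- Fourier coefficient `f̂(S) = E[f · χ_S]`. -/
def fCoeff {n : ℕ} (f : (Fin n → Bool) → ℝ) (S : Finset (Fin n)) : ℝ :=
  uexp (fun x => f x * chi S x)

open Classical in
/-- Fourier degree: the largest `|S|` with `f̂(S) ≠ 0`. -/
def fdeg {n : ℕ} (f : (Fin n → Bool) → ℝ) : ℕ :=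
  (Finset.univ.filter (fun S : Finset (Fin n) => fCoeff f S ≠ 0)).sup Finset.card

/-- A `d`-junta: a function depending on at most `d` coordinates. -/
def IsJunta {n : ℕ} (d : ℕ) (h : (Fin n → Bool) → ℝ) : Prop :=
  ∃ T : Finset (Fin n), T.card ≤ d ∧ ∀ x y, (∀ i ∈ T, x i = y i) → h x = h y

/-- A conical `d`-junta: a nonnegative combination of nonnegative `d`-juntas. -/
def IsConicalJunta {n : ℕ} (d : ℕ) (f : (Fin n → Bool) → ℝ) : Prop :=
  ∃ (N : ℕ) (c : Fin N → ℝ) (g : Fin N → (Fin n → Bool) → ℝ),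
    (∀ i, 0 ≤ c i) ∧ (∀ i x, 0 ≤ g i x) ∧ (∀ i, IsJunta d (g i)) ∧
    ∀ x, f x = ∑ i, c i * g i x

/-- Nonnegative degree `deg₊(f)`: least `d` such that `f` is a conical `d`-junta. -/
def degPlus {n : ℕ} (f : (Fin n → Bool) → ℝ) : ℕ :=
  sInf {d | IsConicalJunta d f}

/-- The (modified inner-product) gadget `g : {0,1}^b × {0,1}^b → {-1,1}`,
with output encoded as a Boolean exponent: `g(x,y) = x₁ ⊕ y₁ ⊕ (⊕ᵢ xᵢyᵢ)`. -/
def gadget {b : ℕ} (x y : Fin b → Bool) : Bool :=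
  decide (((∑ i : Fin b,
        (if x i then (1 : ZMod 2) else 0) * (if y i then (1 : ZMod 2) else 0))
    + (if h : 0 < b then
        (if x ⟨0, h⟩ then (1 : ZMod 2) else 0) + (if y ⟨0, h⟩ then (1 : ZMod 2) else 0)
      else 0)) = 1)

/-- `G = g^{⊗n}`, the gadget applied coordinatewise. -/
def gadgetN {n b : ℕ} (x y : Fin n → Fin b → Bool) : Fin n → Bool :=
  fun i => gadget (x i) (y i)

/-- The pattern matrix `M_f^b(x,y) = f(g^{⊗n}(x,y))`. -/
def patternMatrix {n : ℕ} (b : ℕ) (f : (Fin n → Bool) → ℝ) :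
    (Fin n → Fin b → Bool) → (Fin n → Fin b → Bool) → ℝ :=
  fun x y => f (gadgetN x y)

/-- Nonnegative rank: least `r` such that `M` is a sum of `r` nonnegative rank-1 matrices. -/
def nnRank {α β : Type*} [Fintype α] [Fintype β] (M : α → β → ℝ) : ℕ :=
  sInf {r | ∃ (u : Fin r → α → ℝ) (v : Fin r → β → ℝ),
    (∀ i a, 0 ≤ u i a) ∧ (∀ i b, 0 ≤ v i b) ∧ ∀ a b, M a b = ∑ i, u i a * v i b}

/-- Entrywise sup-norm of a matrix. -/
def supAbs {α β : Type*} [Fintype α] [Fintype β] (M : α → β → ℝ) : ℝ :=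
  ⨆ p : α × β, |M p.1 p.2|

/-- `ε`-approximate nonnegative rank. -/
def approxNNRank {α β : Type*} [Fintype α] [Fintype β] (ε : ℝ) (M : α → β → ℝ) : ℕ :=
  sInf {r | ∃ M' : α → β → ℝ, (∀ a b, 0 ≤ M' a b) ∧
    (∀ a b, |M' a b - M a b| ≤ ε * supAbs M) ∧ nnRank M' ≤ r}

/-- A density: nonnegative with expectation 1 under the uniform distribution. -/
def IsDensity {Ω : Type*} [Fintype Ω] (u : Ω → ℝ) : Prop :=
  (∀ x, 0 ≤ u x) ∧ uexp u = 1

/-- `Pr_{X ~ μ}[X ∈ S]` for a density `μ`. -/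
def prSet {Ω : Type*} [Fintype Ω] (μ : Ω → ℝ) (S : Finset Ω) : ℝ :=
  (∑ x ∈ S, μ x) / (Fintype.card Ω : ℝ)

/-- Min-entropy `H∞(u) = min_x log₂(|Ω| / u(x)) = -log₂ max_x Pr[X = x]`. -/
def minEntropy {Ω : Type*} [Fintype Ω] (u : Ω → ℝ) : ℝ :=
  - Real.logb 2 (⨆ x, u x / (Fintype.card Ω : ℝ))

open Classical in
/-- `Pr_{X ~ u}[X_I = y_I]`, the probability that the projection to `I` agrees with `y`. -/
def prMarg {n : ℕ} {α : Type*} [Fintype α] (u : (Fin n → α) → ℝ) (I : Finset (Fin n))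
    (y : Fin n → α) : ℝ :=
  (∑ x ∈ Finset.univ.filter (fun x : Fin n → α => ∀ i ∈ I, x i = y i), u x)
    / (Fintype.card (Fin n → α) : ℝ)

/-- Min-entropy of the projection `X_I` for `X ~ u`. -/
def projMinEntropy {n : ℕ} {α : Type*} [Fintype α] (u : (Fin n → α) → ℝ)
    (I : Finset (Fin n)) : ℝ :=
  - Real.logb 2 (⨆ y : Fin n → α, prMarg u I y)

/-- Blockwise-dense: every projection has min-entropy at least `0.8 |I| log₂ q`. -/
def IsBlockwiseDense {n : ℕ} {α : Type*} [Fintype α] (u : (Fin n → α) → ℝ) : Prop :=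
  ∀ I : Finset (Fin n),
    0.8 * (I.card : ℝ) * Real.logb 2 (Fintype.card α) ≤ projMinEntropy u I

/-- `d`-CBD with fixed set `I`: `X_I` is fixed and every disjoint projection is dense. -/
def IsCBDWith {n : ℕ} {α : Type*} [Fintype α] (d : ℝ) (I : Finset (Fin n))
    (u : (Fin n → α) → ℝ) : Prop :=
  (I.card : ℝ) ≤ d ∧ projMinEntropy u I = 0 ∧
  ∀ J : Finset (Fin n), Disjoint J I →
    0.8 * (J.card : ℝ) * Real.logb 2 (Fintype.card α) ≤ projMinEntropy u J

/-- `d`-CBD distribution. -/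
def IsCBD {n : ℕ} {α : Type*} [Fintype α] (d : ℝ) (u : (Fin n → α) → ℝ) : Prop :=
  ∃ I, IsCBDWith d I u

open Classical in
/-- `Acc_{u,v}`: the density on `{-1,1}^n` of `g^{⊗n}(X,Y)` for independent `X ~ u`, `Y ~ v`. -/
def AccFn {n b : ℕ} (u v : (Fin n → Fin b → Bool) → ℝ) (z : Fin n → Bool) : ℝ :=
  (2 : ℝ) ^ n * (∑ x : Fin n → Fin b → Bool, ∑ y : Fin n → Fin b → Bool,
      if gadgetN x y = z then u x * v y else 0)
    / (Fintype.card (Fin n → Fin b → Bool) : ℝ) ^ 2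

/-- `ε`-decaying function: mean zero with `|ĥ(S)| ≤ ε^{|S|}`. -/
def IsDecaying {n : ℕ} (ε : ℝ) (h : (Fin n → Bool) → ℝ) : Prop :=
  uexp h = 0 ∧ ∀ S : Finset (Fin n), |fCoeff h S| ≤ ε ^ S.card

/-- A `d`-conjunction, normalized to have expectation 1. -/
def IsConjunction {n : ℕ} (d : ℕ) (C : (Fin n → Bool) → ℝ) : Prop :=
  ∃ (I : Finset (Fin n)) (a : Fin n → Bool), I.card ≤ d ∧
    ∀ x, C x = 2 ^ I.card * (if ∀ i ∈ I, x i = a i then (1 : ℝ) else 0)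

/-- `(ε,δ)`-approximate conical `d`-junta. -/
def IsApproxConicalJunta {n : ℕ} (ε δ : ℝ) (d : ℕ) (f : (Fin n → Bool) → ℝ) : Prop :=
  ∃ (N : ℕ) (lam : Fin N → ℝ) (C h : Fin N → (Fin n → Bool) → ℝ)
    (γ : (Fin n → Bool) → ℝ),
    (∀ i, 0 ≤ lam i) ∧ (∑ i, lam i) ≤ 1 ∧
    (∀ i, IsConjunction d (C i)) ∧ (∀ i, IsDecaying ε (h i)) ∧
    (∀ x, 0 ≤ γ x) ∧ uexp γ ≤ δ ∧
    ∀ x, f x = (∑ i, lam i * C i x * (1 + h i x)) + γ x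

open Classical in
/-- The density `μ` conditioned on the event `S`. -/
def condDensity {Ω : Type*} [Fintype Ω] (μ : Ω → ℝ) (S : Finset Ω) : Ω → ℝ :=
  fun x => if x ∈ S then μ x / prSet μ S else 0

/-- First marginal density of a density on a product. -/
def margFst {Ω : Type*} [Fintype Ω] (μ : Ω × Ω → ℝ) : Ω → ℝ :=
  fun x => (∑ y, μ (x, y)) / (Fintype.card Ω : ℝ)

/-- Second marginal density of a density on a product. -/
def margSnd {Ω : Type*} [Fintype Ω] (μ : Ω × Ω → ℝ) : Ω → ℝ :=
  fun y => (∑ x, μ (x, y)) / (Fintype.card Ω : ℝ)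

open Classical in
/-- `Pr_{(X,Y) ~ μ}[X_I = y.1_I ∧ Y_I = y.2_I]`. -/
def prMarg2 {n : ℕ} {α : Type*} [Fintype α]
    (μ : (Fin n → α) × (Fin n → α) → ℝ) (I : Finset (Fin n))
    (y : (Fin n → α) × (Fin n → α)) : ℝ :=
  (∑ x ∈ Finset.univ.filter
      (fun x : (Fin n → α) × (Fin n → α) =>
        (∀ i ∈ I, x.1 i = y.1 i) ∧ (∀ i ∈ I, x.2 i = y.2 i)), μ x)
    / (Fintype.card ((Fin n → α) × (Fin n → α)) : ℝ)

/-- Min-entropy of the projection `μ_I` of a density on a product, projecting both factors. -/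
def projMinEntropy2 {n : ℕ} {α : Type*} [Fintype α]
    (μ : (Fin n → α) × (Fin n → α) → ℝ) (I : Finset (Fin n)) : ℝ :=
  - Real.logb 2 (⨆ y : (Fin n → α) × (Fin n → α), prMarg2 μ I y)


/-! ### Auxiliary lemmas for stmt13 -/

section Stmt13Aux

open Classical

variable {n q : ℕ}

private lemma card_cube_pos (hq : 0 < q) : 0 < Fintype.card (Fin n → Fin q) := by
  rw [Fintype.card_fun, Fintype.card_fin, Fintype.card_fin]
  exact pow_pos hq n

private lemma card_cube_real (hq : 0 < q) :
    (Fintype.card (Fin n → Fin q) : ℝ) = (q : ℝ) ^ ((n : ℕ) : ℝ) := by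
  rw [Fintype.card_fun, Fintype.card_fin, Fintype.card_fin, Real.rpow_natCast]
  push_cast
  ring

private lemma prSet_nonneg {μ : (Fin n → Fin q) → ℝ} (hμ0 : ∀ x, 0 ≤ μ x)
    (S : Finset (Fin n → Fin q)) : 0 ≤ prSet μ S :=
  div_nonneg (Finset.sum_nonneg fun i _ => hμ0 i) (Nat.cast_nonneg _)

private lemma prSet_mono {μ : (Fin n → Fin q) → ℝ} (hμ0 : ∀ x, 0 ≤ μ x)
    {S T : Finset (Fin n → Fin q)} (h : S ⊆ T) : prSet μ S ≤ prSet μ T := by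
  unfold prSet
  gcongr
  exact fun i _ _ => hμ0 i

private lemma prSet_empty (μ : (Fin n → Fin q) → ℝ) : prSet μ (∅ : Finset (Fin n → Fin q)) = 0 := by
  simp [prSet]

private lemma prSet_pos_of_mem (hq : 0 < q) {μ : (Fin n → Fin q) → ℝ} (hμ0 : ∀ x, 0 ≤ μ x)
    {S : Finset (Fin n → Fin q)} {x : Fin n → Fin q} (hx : x ∈ S) (hpos : 0 < μ x) :
    0 < prSet μ S := by
  unfold prSet
  apply div_pos _ (by exact_mod_cast card_cube_pos hq)
  exact lt_of_lt_of_le hpos (Finset.single_le_sum (fun i _ => hμ0 i) hx)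

private lemma exists_pos_of_prSet_pos {μ : (Fin n → Fin q) → ℝ} (hμ0 : ∀ x, 0 ≤ μ x)
    {S : Finset (Fin n → Fin q)} (hS : 0 < prSet μ S) : ∃ x ∈ S, 0 < μ x := by
  by_contra h
  push_neg at h
  have hsum : ∑ x ∈ S, μ x ≤ 0 := Finset.sum_nonpos (fun x hx => h x hx)
  have : prSet μ S ≤ 0 := div_nonpos_of_nonpos_of_nonneg hsum (Nat.cast_nonneg _)
  linarith

open Classical in
private lemma prMarg_condDensity (μ : (Fin n → Fin q) → ℝ)
    (S : Finset (Fin n → Fin q)) (hS : prSet μ S ≠ 0)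
    (I : Finset (Fin n)) (y : Fin n → Fin q) :
    prMarg (condDensity μ S) I y
      = prSet μ (S.filter (fun x => ∀ i ∈ I, x i = y i)) / prSet μ S := by
  unfold prMarg condDensity prSet
  rw [div_div, mul_comm, ← div_div]
  congr 1
  conv_rhs => rw [Finset.sum_div]
  refine ((Finset.sum_subset ?_ ?_).symm).trans (Finset.sum_congr rfl ?_)
  · intro x hx
    simp only [Finset.mem_filter] at hx ⊢
    exact ⟨Finset.mem_univ x, hx.2⟩
  · intro x hxB hx
    simp only [Finset.mem_filter] at hxB hx
    apply if_neg
    intro hxS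
    exact hx ⟨hxS, hxB.2⟩
  · intro x hx
    exact if_pos (Finset.mem_filter.mp hx).1

private lemma prMarg_cond_le_one (hq : 0 < q) {μ : (Fin n → Fin q) → ℝ}
    (hμ0 : ∀ x, 0 ≤ μ x) {S : Finset (Fin n → Fin q)} (hS : 0 < prSet μ S)
    (I : Finset (Fin n)) (y : Fin n → Fin q) :
    prMarg (condDensity μ S) I y ≤ 1 := by
  rw [prMarg_condDensity μ S hS.ne' I y]
  rw [div_le_one hS]
  exact prSet_mono hμ0 (Finset.filter_subset _ _)

private lemma le_projMinEntropy (hq : 2 ≤ q) (u : (Fin n → Fin q) → ℝ)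
    (I : Finset (Fin n)) (y0 : Fin n → Fin q) (hpos : 0 < prMarg u I y0)
    (hle : ∀ y, prMarg u I y ≤ (q : ℝ) ^ (-(0.8 * (I.card : ℝ)))) :
    0.8 * (I.card : ℝ) * Real.logb 2 (Fintype.card (Fin q)) ≤ projMinEntropy u I := by
  have hq1 : (1 : ℝ) < q := by exact_mod_cast hq
  have hq0 : (0 : ℝ) < q := by linarith
  haveI : Nonempty (Fin q) := ⟨⟨0, by omega⟩⟩
  unfold projMinEntropy
  set s := ⨆ y : Fin n → Fin q, prMarg u I y with hs
  have hsl : prMarg u I y0 ≤ s := by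
    rw [hs]
    exact le_ciSup (Finite.bddAbove_range _) y0
  have hs0 : 0 < s := lt_of_lt_of_le hpos hsl
  have hsle : s ≤ (q : ℝ) ^ (-(0.8 * (I.card : ℝ))) := ciSup_le hle
  have hlog : Real.logb 2 s ≤ Real.logb 2 ((q : ℝ) ^ (-(0.8 * (I.card : ℝ)))) :=
    (Real.logb_le_logb (by norm_num) hs0 (Real.rpow_pos_of_pos hq0 _)).mpr hsle
  have h2 : Real.logb 2 ((q : ℝ) ^ (-(0.8 * (I.card : ℝ))))
      = -(0.8 * (I.card : ℝ)) * Real.logb 2 (q : ℝ) := by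
    rw [Real.logb, Real.log_rpow hq0, Real.logb]
    ring
  rw [h2] at hlog
  rw [Fintype.card_fin]
  linarith

private lemma projMinEntropy_eq_zero (u : (Fin n → Fin q) → ℝ)
    (I : Finset (Fin n)) (y0 : Fin n → Fin q) (h1 : prMarg u I y0 = 1)
    (hle : ∀ y, prMarg u I y ≤ 1) : projMinEntropy u I = 0 := by
  haveI : Nonempty (Fin n → Fin q) := ⟨y0⟩
  have hsup : (⨆ y : Fin n → Fin q, prMarg u I y) = 1 :=
    le_antisymm (ciSup_le hle) (h1 ▸ le_ciSup (Finite.bddAbove_range _) y0)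
  unfold projMinEntropy
  rw [hsup, Real.logb_one, neg_zero]

open Classical in
private lemma card_agree (J : Finset (Fin n)) (β : Fin n → Fin q) :
    (Finset.univ.filter (fun x : Fin n → Fin q => ∀ i ∈ J, x i = β i)).card
      = q ^ (n - J.card) := by
  classical
  have hset : (Finset.univ.filter (fun x : Fin n → Fin q => ∀ i ∈ J, x i = β i))
      = Fintype.piFinset (fun i => if i ∈ J then {β i} else Finset.univ) := by
    ext x
    simp only [Finset.mem_filter, Finset.mem_univ, true_and, Fintype.mem_piFinset]
    constructor
    · intro h i
      by_cases hi : i ∈ J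
      · simp [hi, h i hi]
      · simp [hi]
    · intro h i hi
      have := h i
      rw [if_pos hi] at this
      simpa using this
  rw [hset, Fintype.card_piFinset]
  rw [← Finset.prod_mul_prod_compl J]
  have h1 : (∏ i ∈ J, (if i ∈ J then ({β i} : Finset (Fin q)) else Finset.univ).card) = 1 :=
    Finset.prod_eq_one (fun i hi => by rw [if_pos hi, Finset.card_singleton])
  have h2 : (∏ i ∈ Jᶜ, (if i ∈ J then ({β i} : Finset (Fin q)) else Finset.univ).card)
      = q ^ (n - J.card) := by
    rw [Finset.prod_congr rfl (fun i hi => by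
      rw [if_neg (Finset.mem_compl.mp hi), Finset.card_univ, Fintype.card_fin]),
      Finset.prod_const, Finset.card_compl, Fintype.card_fin]
  rw [h1, h2, one_mul]

private lemma mem_foldr {α : Type*} [DecidableEq α] (l : List (Finset α)) (e : Finset α)
    (x : α) : x ∈ l.foldr (· ∪ ·) e ↔ (∃ P ∈ l, x ∈ P) ∨ x ∈ e := by
  induction l with
  | nil => simp
  | cons a l ih =>
    simp only [List.foldr_cons, Finset.mem_union, ih, List.mem_cons]
    constructor
    · rintro (h | (⟨P, hP, hxP⟩ | h))
      · exact Or.inl ⟨a, Or.inl rfl, h⟩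
      · exact Or.inl ⟨P, Or.inr hP, hxP⟩
      · exact Or.inr h
    · rintro (⟨P, (rfl | hP), hxP⟩ | h)
      · exact Or.inl hxP
      · exact Or.inr (Or.inl ⟨P, hP, hxP⟩)
      · exact Or.inr (Or.inr h)

private lemma subset_foldr {α : Type*} [DecidableEq α] {l : List (Finset α)} {e P : Finset α}
    (h : P ∈ l) : P ⊆ l.foldr (· ∪ ·) e := by
  intro x hx
  exact (mem_foldr l e x).mpr (Or.inl ⟨P, h, hx⟩)

private lemma err_subset_foldr {α : Type*} [DecidableEq α] (l : List (Finset α)) (e : Finset α) :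
    e ⊆ l.foldr (· ∪ ·) e := by
  intro x hx
  exact (mem_foldr l e x).mpr (Or.inr hx)

open Classical in
private lemma decomp_aux (hq : 2 ≤ q) (μ : (Fin n → Fin q) → ℝ)
    (hμ0 : ∀ x, 0 ≤ μ x) (t : ℝ) (hdef : ∀ x, μ x ≤ (q : ℝ) ^ t) :
    ∀ (m : ℕ) (A : Finset (Fin n → Fin q)), A.card ≤ m →
    ∃ (parts : List (Finset (Fin n → Fin q))) (Serr : Finset (Fin n → Fin q)),
      List.Pairwise Disjoint parts ∧
      (∀ P ∈ parts, Disjoint P Serr) ∧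
      parts.foldr (· ∪ ·) Serr = A ∧
      (∀ P ∈ parts, 0 < prSet μ P ∧ IsCBD (10 * t) (condDensity μ P)) ∧
      prSet μ Serr ≤ (q : ℝ) ^ (-t) := by
  classical
  have hq1 : (1 : ℝ) < q := by exact_mod_cast hq
  have hq0 : (0 : ℝ) < q := by linarith
  have hqn : 0 < q := by omega
  have hC : (0 : ℝ) < (Fintype.card (Fin n → Fin q) : ℝ) := by
    exact_mod_cast card_cube_pos (n := n) hqn
  intro m
  induction m with
  | zero =>
    intro A hA
    have hAe : A = ∅ := Finset.card_eq_zero.mp (Nat.le_zero.mp hA)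
    subst hAe
    exact ⟨[], ∅, by simp, by simp, by simp, by simp,
      by rw [prSet_empty]; exact Real.rpow_nonneg hq0.le _⟩
  | succ m ih =>
    intro A hA
    by_cases herr : prSet μ A ≤ (q : ℝ) ^ (-t)
    · exact ⟨[], A, by simp, by simp, by simp, by simp, herr⟩
    push_neg at herr
    have hp0 : 0 < prSet μ A := lt_trans (Real.rpow_pos_of_pos hq0 _) herr
    -- t is positive
    have ht0 : 0 < t := by
      have h1 : prSet μ A ≤ (q : ℝ) ^ t := by
        unfold prSet
        rw [div_le_iff₀ hC]
        calc ∑ x ∈ A, μ x ≤ ∑ x ∈ A, (q : ℝ) ^ t :=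
              Finset.sum_le_sum (fun x _ => hdef x)
          _ = (A.card : ℝ) * (q : ℝ) ^ t := by rw [Finset.sum_const, nsmul_eq_mul]
          _ ≤ (Fintype.card (Fin n → Fin q) : ℝ) * (q : ℝ) ^ t := by
              gcongr
              exact_mod_cast Finset.card_le_univ A
          _ = (q : ℝ) ^ t * (Fintype.card (Fin n → Fin q) : ℝ) := mul_comm _ _
      have h2 : (q : ℝ) ^ (-t) < (q : ℝ) ^ t := lt_of_lt_of_le herr h1
      have := (Real.rpow_lt_rpow_left_iff hq1).mp h2
      linarith
    -- violating pairs
    set V : Finset (Finset (Fin n) × (Fin n → Fin q)) :=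
      Finset.univ.filter (fun Jβ =>
        prSet μ A * (q : ℝ) ^ (-(0.8 * (Jβ.1.card : ℝ)))
          < prSet μ (A.filter (fun x => ∀ i ∈ Jβ.1, x i = Jβ.2 i))) with hV
    by_cases hVne : V.Nonempty
    · -- extract a part, recurse
      obtain ⟨⟨J, β⟩, hmem, hmax⟩ := Finset.exists_max_image V (fun Jβ => Jβ.1.card) hVne
      set S1 : Finset (Fin n → Fin q) := A.filter (fun x => ∀ i ∈ J, x i = β i) with hS1
      have hviol : prSet μ A * (q : ℝ) ^ (-(0.8 * (J.card : ℝ))) < prSet μ S1 := by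
        have := Finset.mem_filter.mp hmem
        exact this.2
      have hm0 : 0 < prSet μ S1 :=
        lt_trans (mul_pos hp0 (Real.rpow_pos_of_pos hq0 _)) hviol
      have hS1A : S1 ⊆ A := Finset.filter_subset _ _
      have hS1ne : S1.Nonempty := by
        rcases Finset.eq_empty_or_nonempty S1 with h | h
        · rw [h, prSet_empty] at hm0; linarith
        · exact h
      have hssub : A \ S1 ⊂ A := Finset.sdiff_ssubset hS1A hS1ne
      have hcard : (A \ S1).card ≤ m := by
        have := Finset.card_lt_card hssub
        omega
      obtain ⟨parts', Serr', hPW', hDE', hfold', hparts', herr'⟩ := ih (A \ S1) hcard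
      have hsub' : ∀ P ∈ parts', P ⊆ A \ S1 := fun P hP => hfold' ▸ subset_foldr hP
      have hsubE : Serr' ⊆ A \ S1 := hfold' ▸ err_subset_foldr parts' Serr'
      have hdisj : ∀ X ⊆ A \ S1, Disjoint S1 X := by
        intro X hX
        exact Finset.disjoint_left.mpr (fun a haS haX => (Finset.mem_sdiff.mp (hX haX)).2 haS)
      refine ⟨S1 :: parts', Serr', ?_, ?_, ?_, ?_, herr'⟩
      · exact List.pairwise_cons.mpr ⟨fun P hP => hdisj P (hsub' P hP), hPW'⟩
      · intro P hP
        rcases List.mem_cons.mp hP with rfl | hP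
        · exact hdisj Serr' hsubE
        · exact hDE' P hP
      · rw [List.foldr_cons, hfold']
        exact Finset.union_sdiff_of_subset hS1A
      · intro P hP
        rcases List.mem_cons.mp hP with rfl | hP
        swap
        · exact hparts' P hP
        refine ⟨hm0, J, ?_, ?_, ?_⟩
        · -- |J| ≤ 10 t
          have hjn : J.card ≤ n := by
            have := Finset.card_le_univ J
            simpa using this
          set j : ℝ := (J.card : ℝ) with hj
          have hub : prSet μ S1 ≤ (q : ℝ) ^ (((n : ℝ) - j) + t - (n : ℝ)) := by
            have hcardS : (S1.card : ℝ) ≤ (q : ℝ) ^ ((n : ℝ) - j) := by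
              have h := Finset.card_le_card (Finset.filter_subset_filter
                (fun x => ∀ i ∈ J, x i = β i) (Finset.subset_univ A))
              rw [card_agree (q := q) J β] at h
              have h2 : ((q ^ (n - J.card) : ℕ) : ℝ) = (q : ℝ) ^ ((n : ℝ) - j) := by
                push_cast
                rw [← Real.rpow_natCast (q : ℝ) (n - J.card)]
                congr 1
                rw [Nat.cast_sub hjn, ← hj]
              rw [← h2]
              exact_mod_cast h
            have hsum : ∑ x ∈ S1, μ x ≤ (q : ℝ) ^ ((n : ℝ) - j) * (q : ℝ) ^ t := by
              calc ∑ x ∈ S1, μ x ≤ ∑ x ∈ S1, (q : ℝ) ^ t :=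
                    Finset.sum_le_sum (fun x _ => hdef x)
                _ = (S1.card : ℝ) * (q : ℝ) ^ t := by rw [Finset.sum_const, nsmul_eq_mul]
                _ ≤ (q : ℝ) ^ ((n : ℝ) - j) * (q : ℝ) ^ t := by gcongr
            calc prSet μ S1 = (∑ x ∈ S1, μ x) / (Fintype.card (Fin n → Fin q) : ℝ) := rfl
              _ ≤ ((q : ℝ) ^ ((n : ℝ) - j) * (q : ℝ) ^ t)
                    / (Fintype.card (Fin n → Fin q) : ℝ) := by gcongr
              _ = (q : ℝ) ^ (((n : ℝ) - j) + t - (n : ℝ)) := by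
                  rw [card_cube_real hqn, ← Real.rpow_add hq0 ((n : ℝ) - j) t,
                    ← Real.rpow_sub hq0]
          have hlb : (q : ℝ) ^ (-t + -(0.8 * j)) < prSet μ S1 := by
            rw [Real.rpow_add hq0]
            calc (q : ℝ) ^ (-t) * (q : ℝ) ^ (-(0.8 * j))
                < prSet μ A * (q : ℝ) ^ (-(0.8 * j)) := by
                  exact mul_lt_mul_of_pos_right herr (Real.rpow_pos_of_pos hq0 _)
              _ < prSet μ S1 := hviol
          have hexp : (-t + -(0.8 * j)) < ((n : ℝ) - j) + t - (n : ℝ) :=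
            (Real.rpow_lt_rpow_left_iff hq1).mp (lt_of_lt_of_le hlb hub)
          have : j ≤ 10 * t := by nlinarith
          exact this
        · -- fixed on J
          apply projMinEntropy_eq_zero _ J β
          · rw [prMarg_condDensity μ S1 hm0.ne' J β]
            have : S1.filter (fun x => ∀ i ∈ J, x i = β i) = S1 :=
              Finset.filter_eq_self.mpr (fun x hx => (Finset.mem_filter.mp hx).2)
            rw [this, div_self hm0.ne']
          · exact fun y => prMarg_cond_le_one hqn hμ0 hm0 J y
        · -- dense outside J
          intro K hK
          obtain ⟨x0, hx0S, hx0pos⟩ := exists_pos_of_prSet_pos hμ0 hm0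
          have hx0mem : x0 ∈ S1.filter (fun x => ∀ i ∈ K, x i = x0 i) :=
            Finset.mem_filter.mpr ⟨hx0S, fun i _ => rfl⟩
          apply le_projMinEntropy hq _ K x0
          · rw [prMarg_condDensity μ S1 hm0.ne' K x0]
            exact div_pos (prSet_pos_of_mem hqn hμ0 hx0mem hx0pos) hm0
          · intro γ
            rcases Finset.eq_empty_or_nonempty K with rfl | hKne
            · rw [prMarg_condDensity μ S1 hm0.ne' _ γ]
              have hfe : S1.filter (fun x => ∀ i ∈ (∅ : Finset (Fin n)), x i = γ i) = S1 :=
                Finset.filter_true_of_mem (fun x _ i hi => absurd hi (Finset.notMem_empty i))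
              rw [hfe, div_self hm0.ne']
              simp
            · set y' : Fin n → Fin q := fun i => if i ∈ K then γ i else β i with hy'
              have hsetKey : S1.filter (fun x => ∀ i ∈ K, x i = γ i)
                  = A.filter (fun x => ∀ i ∈ J ∪ K, x i = y' i) := by
                ext x
                simp only [hS1, Finset.filter_filter, Finset.mem_filter]
                constructor
                · rintro ⟨hxA, hJ, hKK⟩
                  refine ⟨hxA, fun i hi => ?_⟩
                  rcases Finset.mem_union.mp hi with hiJ | hiK
                  · have hiK' : i ∉ K := Finset.disjoint_right.mp hK hiJ
                    simp only [hy', if_neg hiK']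
                    exact hJ i hiJ
                  · simp only [hy', if_pos hiK]
                    exact hKK i hiK
                · rintro ⟨hxA, hall⟩
                  refine ⟨hxA, fun i hi => ?_, fun i hi => ?_⟩
                  · have := hall i (Finset.mem_union_left K hi)
                    have hiK' : i ∉ K := Finset.disjoint_right.mp hK hi
                    simp only [hy', if_neg hiK'] at this
                    exact this
                  · have := hall i (Finset.mem_union_right J hi)
                    simp only [hy', if_pos hi] at this
                    exact this
              have hnotV : (J ∪ K, y') ∉ V := by
                intro hmem'
                have hle' := hmax _ hmem'
                simp only at hle'
                have hcu : (J ∪ K).card = J.card + K.card :=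
                  Finset.card_union_of_disjoint (Finset.disjoint_left.mpr
                    (fun a ha => Finset.disjoint_right.mp hK ha))
                have : 0 < K.card := Finset.card_pos.mpr hKne
                omega
              have hbound : prSet μ (A.filter (fun x => ∀ i ∈ J ∪ K, x i = y' i))
                  ≤ prSet μ A * (q : ℝ) ^ (-(0.8 * (((J ∪ K).card : ℕ) : ℝ))) := by
                have := hnotV
                rw [hV, Finset.mem_filter] at this
                push_neg at this
                exact this (Finset.mem_univ _)
              have hcu : (((J ∪ K).card : ℕ) : ℝ) = (J.card : ℝ) + (K.card : ℝ) := by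
                rw [Finset.card_union_of_disjoint (Finset.disjoint_left.mpr
                  (fun a ha => Finset.disjoint_right.mp hK ha))]
                push_cast
                ring
              rw [prMarg_condDensity μ S1 hm0.ne' K γ, hsetKey]
              have hd0 : (0 : ℝ) < prSet μ A * (q : ℝ) ^ (-(0.8 * (J.card : ℝ))) :=
                mul_pos hp0 (Real.rpow_pos_of_pos hq0 _)
              calc prSet μ (A.filter (fun x => ∀ i ∈ J ∪ K, x i = y' i)) / prSet μ S1
                  ≤ (prSet μ A * (q : ℝ) ^ (-(0.8 * (((J ∪ K).card : ℕ) : ℝ))))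
                      / prSet μ S1 := by
                    gcongr
                _ ≤ (prSet μ A * (q : ℝ) ^ (-(0.8 * (((J ∪ K).card : ℕ) : ℝ))))
                      / (prSet μ A * (q : ℝ) ^ (-(0.8 * (J.card : ℝ)))) := by
                    apply div_le_div_of_nonneg_left _ hd0 hviol.le
                    positivity
                _ = (q : ℝ) ^ (-(0.8 * (K.card : ℝ))) := by
                    rw [hcu, show -(0.8 * ((J.card : ℝ) + (K.card : ℝ)))
                        = -(0.8 * (J.card : ℝ)) + -(0.8 * (K.card : ℝ)) from by ring,
                      Real.rpow_add hq0, ← mul_assoc]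
                    exact mul_div_cancel_left₀ _ hd0.ne'
    · -- no violating pair: A itself is blockwise dense
      have hnv : ∀ (J : Finset (Fin n)) (β : Fin n → Fin q),
          prSet μ (A.filter (fun x => ∀ i ∈ J, x i = β i))
            ≤ prSet μ A * (q : ℝ) ^ (-(0.8 * (J.card : ℝ))) := by
        intro J β
        by_contra hcon
        push_neg at hcon
        exact hVne ⟨(J, β), Finset.mem_filter.mpr ⟨Finset.mem_univ _, hcon⟩⟩
      refine ⟨[A], ∅, by simp, by simp, by simp, ?_, by
        rw [prSet_empty]; exact Real.rpow_nonneg hq0.le _⟩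
      intro P hP
      rcases List.mem_cons.mp hP with rfl | hP
      swap
      · simp at hP
      refine ⟨hp0, ∅, by simpa using by linarith, ?_, ?_⟩
      · -- fixed on ∅
        obtain ⟨x0, hx0S, hx0pos⟩ := exists_pos_of_prSet_pos hμ0 hp0
        apply projMinEntropy_eq_zero _ ∅ x0
        · rw [prMarg_condDensity μ P hp0.ne' ∅ x0]
          have hfe : P.filter (fun x => ∀ i ∈ (∅ : Finset (Fin n)), x i = x0 i) = P :=
            Finset.filter_true_of_mem (fun x _ i hi => absurd hi (Finset.notMem_empty i))
          rw [hfe, div_self hp0.ne']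
        · exact fun y => prMarg_cond_le_one hqn hμ0 hp0 ∅ y
      · intro K _
        obtain ⟨x0, hx0S, hx0pos⟩ := exists_pos_of_prSet_pos hμ0 hp0
        have hx0mem : x0 ∈ P.filter (fun x => ∀ i ∈ K, x i = x0 i) :=
          Finset.mem_filter.mpr ⟨hx0S, fun i _ => rfl⟩
        apply le_projMinEntropy hq _ K x0
        · rw [prMarg_condDensity μ P hp0.ne' K x0]
          exact div_pos (prSet_pos_of_mem hqn hμ0 hx0mem hx0pos) hp0
        · intro γ
          rw [prMarg_condDensity μ P hp0.ne' K γ]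
          rw [div_le_iff₀ hp0]
          calc prSet μ (P.filter (fun x => ∀ i ∈ K, x i = γ i))
              ≤ prSet μ P * (q : ℝ) ^ (-(0.8 * (K.card : ℝ))) := hnv K γ
            _ = (q : ℝ) ^ (-(0.8 * (K.card : ℝ))) * prSet μ P := mul_comm _ _

end Stmt13Aux

/-- one-dimensional decomposition of a high min-entropy density
into conditionals that are `10t`-CBD, plus a small error set. -/
theorem stmt13 (n q : ℕ) (hn : 1 ≤ n)
    (μ : (Fin n → Fin q) → ℝ) (hμ : IsDensity μ)
    (t : ℝ) (hent : ((n : ℝ) - t) * Real.logb 2 (q : ℝ) ≤ minEntropy μ) :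
    ∃ (N : ℕ) (S : Fin N → Finset (Fin n → Fin q)) (Serr : Finset (Fin n → Fin q)),
      (∀ i j, i ≠ j → Disjoint (S i) (S j)) ∧
      (∀ i, Disjoint (S i) Serr) ∧
      ((Finset.univ.biUnion S) ∪ Serr = Finset.univ) ∧
      (∀ i, 0 < prSet μ (S i) ∧ IsCBD (10 * t) (condDensity μ (S i))) ∧
      prSet μ Serr ≤ (q : ℝ) ^ (-t) := by
  classical
  rcases Nat.lt_or_ge q 2 with hq | hq
  · interval_cases q
    · -- q = 0 : contradiction with density
      exfalso
      have hcard : Fintype.card (Fin n → Fin 0) = 0 := by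
        rw [Fintype.card_fun, Fintype.card_fin, Fintype.card_fin]
        exact Nat.zero_pow (by omega)
      have := hμ.2
      rw [uexp, hcard] at this
      norm_num at this
    · -- q = 1 : everything is error, but error probability bound is 1
      refine ⟨0, fun i => i.elim0, Finset.univ, fun i => i.elim0, fun i => i.elim0, ?_,
        fun i => i.elim0, ?_⟩
      · simp
      · have h1 : prSet μ (Finset.univ : Finset (Fin n → Fin 1)) = 1 := hμ.2
        rw [h1]
        norm_num
  · -- main case q ≥ 2
    have hq1 : (1 : ℝ) < q := by exact_mod_cast hq
    have hq0 : (0 : ℝ) < q := by linarith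
    have hqn : 0 < q := by omega
    haveI : Nonempty (Fin q) := ⟨⟨0, by omega⟩⟩
    have hC : (0 : ℝ) < (Fintype.card (Fin n → Fin q) : ℝ) := by
      exact_mod_cast card_cube_pos (n := n) hqn
    -- pointwise bound on μ from min-entropy
    have hdef : ∀ x, μ x ≤ (q : ℝ) ^ t := by
      have hex : ∃ x0, 0 < μ x0 := by
        by_contra h
        push_neg at h
        have hsum : ∑ x, μ x ≤ 0 := Finset.sum_nonpos (fun x _ => h x)
        have : uexp μ ≤ 0 := div_nonpos_of_nonpos_of_nonneg hsum (Nat.cast_nonneg _)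
        rw [hμ.2] at this
        linarith
      obtain ⟨x0, hx0⟩ := hex
      set s := ⨆ x : Fin n → Fin q, μ x / (Fintype.card (Fin n → Fin q) : ℝ) with hs
      have hsl : ∀ x, μ x / (Fintype.card (Fin n → Fin q) : ℝ) ≤ s := by
        intro x
        rw [hs]
        exact le_ciSup (Finite.bddAbove_range
          (fun y : Fin n → Fin q => μ y / (Fintype.card (Fin n → Fin q) : ℝ))) x
      have hs0 : 0 < s := lt_of_lt_of_le (div_pos hx0 hC) (hsl x0)
      have hlog : Real.logb 2 s ≤ (t - (n : ℝ)) * Real.logb 2 (q : ℝ) := by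
        have hhe := hent
        unfold minEntropy at hhe
        rw [← hs] at hhe
        have hr : (t - (n : ℝ)) * Real.logb 2 (q : ℝ)
            = -(((n : ℝ) - t) * Real.logb 2 (q : ℝ)) := by ring
        linarith
      have h2 : Real.logb 2 ((q : ℝ) ^ (t - (n : ℝ)))
          = (t - (n : ℝ)) * Real.logb 2 (q : ℝ) := by
        rw [Real.logb, Real.log_rpow hq0, Real.logb]
        ring
      have hsle : s ≤ (q : ℝ) ^ (t - (n : ℝ)) := by
        rw [← h2] at hlog
        exact (Real.logb_le_logb (by norm_num) hs0 (Real.rpow_pos_of_pos hq0 _)).mp hlog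
      intro x
      have := le_trans (hsl x) hsle
      rw [div_le_iff₀ hC] at this
      calc μ x ≤ (q : ℝ) ^ (t - (n : ℝ)) * (Fintype.card (Fin n → Fin q) : ℝ) := this
        _ = (q : ℝ) ^ t := by
            rw [card_cube_real hqn, ← Real.rpow_add hq0,
              show t - ((n : ℕ) : ℝ) + ((n : ℕ) : ℝ) = t from by ring]
    obtain ⟨parts, Serr, hPW, hDE, hfold, hparts, herrb⟩ :=
      decomp_aux hq μ hμ.1 t hdef (Finset.univ : Finset (Fin n → Fin q)).card
        Finset.univ le_rfl
    refine ⟨parts.length, fun i => parts.get i, Serr, ?_, ?_, ?_, ?_, herrb⟩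
    · intro i j hij
      have hpw := List.pairwise_iff_get.mp hPW
      rcases lt_or_gt_of_ne hij with h | h
      · exact hpw i j h
      · exact (hpw j i h).symm
    · exact fun i => hDE _ (parts.get_mem i)
    · ext x
      simp only [Finset.mem_union, Finset.mem_biUnion, Finset.mem_univ, true_and,
        iff_true]
      have : x ∈ parts.foldr (· ∪ ·) Serr := hfold ▸ Finset.mem_univ x
      rcases (mem_foldr parts Serr x).mp this with ⟨P, hP, hxP⟩ | h
      · obtain ⟨i, hi, rfl⟩ := List.mem_iff_get.mp hP
        exact Or.inl ⟨i, hxP⟩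
      · exact Or.inr h
    · exact fun i => hparts _ (parts.get_mem i)
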